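/- For K ≥ 3 and any fixed index s, the set {c_{(s,j,k)} : j < k, j ≠ s, k ≠ s} of (K−1)(K−2)/2 vectors is linearly independent, and hence forms a basis of the cyclic space C. -/

import Mathlib

open scoped RealInnerProductSpace BigOperators

/-- Index set of lexicographically ordered pairs `(s,t)` with `s < t` in `Fin K`. -/
abbrev PairIdx (K : ℕ) := {p : Fin K × Fin K // p.1 < p.2}

/-- The vector `b_k` with `(s,t)` entry `𝟙(s=k) − 𝟙(t=k)`. -/
noncomputable def bvec (K : ℕ) (k : Fin K) : EuclideanSpace ℝ (PairIdx K) :=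
  WithLp.toLp 2 fun (p : PairIdx K) => (if p.1.1 = k then (1:ℝ) else 0) - (if p.1.2 = k then (1:ℝ) else 0)

/-- The cyclic vector `c_{(i,j,k)}`. -/
noncomputable def cvec (K : ℕ) (i j k : Fin K) : EuclideanSpace ℝ (PairIdx K) :=
  WithLp.toLp 2 fun (p : PairIdx K) =>
    (if (p.1.1, p.1.2) = (i, j) ∨ (p.1.1, p.1.2) = (j, k) ∨ (p.1.1, p.1.2) = (k, i)
      then (1:ℝ) else 0)
    - (if (p.1.1, p.1.2) = (j, i) ∨ (p.1.1, p.1.2) = (k, j) ∨ (p.1.1, p.1.2) = (i, k)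
      then (1:ℝ) else 0)
/-- The family of cyclic vectors anchored at a fixed index `s`. -/
noncomputable def cfam (K : ℕ) (s : Fin K)
    (p : {p : Fin K × Fin K // p.1 < p.2 ∧ p.1 ≠ s ∧ p.2 ≠ s}) :
    EuclideanSpace ℝ (PairIdx K) :=
  cvec K s p.1.1 p.1.2

namespace Anchored

variable {K : ℕ}

def Craw (i j k : Fin K) : Fin K × Fin K → ℝ := fun q =>
  (if q = (i, j) ∨ q = (j, k) ∨ q = (k, i) then (1:ℝ) else 0)
  - (if q = (j, i) ∨ q = (k, j) ∨ q = (i, k) then (1:ℝ) else 0)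

lemma cvec_apply (i j k : Fin K) (p : PairIdx K) :
    cvec K i j k p = Craw i j k p.1 := by
  simp [cvec, Craw]

lemma Craw_swap (i j k : Fin K) (a b : Fin K) :
    Craw i j k (b, a) = - Craw i j k (a, b) := by
  have h1 : ((b,a) = (i, j) ∨ (b,a) = (j, k) ∨ (b,a) = (k, i)) ↔
      ((a,b) = (j, i) ∨ (a,b) = (k, j) ∨ (a,b) = (i, k)) := by
    simp only [Prod.mk.injEq]; tauto
  have h2 : ((b,a) = (j, i) ∨ (b,a) = (k, j) ∨ (b,a) = (i, k)) ↔
      ((a,b) = (i, j) ∨ (a,b) = (j, k) ∨ (a,b) = (k, i)) := by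
    simp only [Prod.mk.injEq]; tauto
  simp only [Craw, if_congr h1 rfl rfl, if_congr h2 rfl rfl]
  ring

lemma Craw_diag (i j k : Fin K) (a : Fin K) : Craw i j k (a, a) = 0 := by
  have := Craw_swap i j k a a
  linarith

noncomputable def Vext (x : EuclideanSpace ℝ (PairIdx K)) : Fin K × Fin K → ℝ :=
  fun q => if h : q.1 < q.2 then x ⟨q, h⟩ else if h : q.2 < q.1 then - x ⟨(q.2, q.1), h⟩ else 0

lemma Vext_lt (x : EuclideanSpace ℝ (PairIdx K)) {a b : Fin K} (h : a < b) :
    Vext x (a, b) = x ⟨(a, b), h⟩ := by simp [Vext, h]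

lemma Vext_swap (x : EuclideanSpace ℝ (PairIdx K)) (a b : Fin K) :
    Vext x (b, a) = - Vext x (a, b) := by
  rcases lt_trichotomy a b with h | h | h
  · simp [Vext, h, asymm h]
  · subst h; simp [Vext, lt_irrefl]
  · simp [Vext, h, asymm h]

lemma Vext_diag (x : EuclideanSpace ℝ (PairIdx K)) (a : Fin K) : Vext x (a, a) = 0 := by
  simp [Vext, lt_irrefl]

lemma Vext_coe (x : EuclideanSpace ℝ (PairIdx K)) (p : PairIdx K) :
    Vext x p.1 = x p := by
  obtain ⟨⟨a, b⟩, h⟩ := p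
  simp [Vext, h]

lemma sum_pair (f : Fin K × Fin K → ℝ) :
    ∑ p : PairIdx K, f p.1 = ∑ u : Fin K, ∑ v : Fin K, if u < v then f (u, v) else 0 := by
  rw [← Finset.sum_product', ← Finset.sum_filter]
  simp only [Prod.mk.eta, Finset.univ_product_univ]
  refine (Finset.sum_subtype _ ?_ f).symm
  intro x; simp

/-- symmetrization: for S symmetric with zero diagonal. -/
lemma half_sum (S : Fin K × Fin K → ℝ) (hsymm : ∀ u v, S (v, u) = S (u, v))
    (hdiag : ∀ u, S (u, u) = 0) :
    2 * (∑ u : Fin K, ∑ v : Fin K, if u < v then S (u, v) else 0)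
      = ∑ u : Fin K, ∑ v : Fin K, S (u, v) := by
  have key : ∀ u v : Fin K,
      S (u, v) = (if u < v then S (u, v) else 0) + (if v < u then S (u, v) else 0) := by
    intro u v
    rcases lt_trichotomy u v with h | h | h
    · simp [h, asymm h]
    · subst h; simp [hdiag, lt_irrefl]
    · simp [h, asymm h]
  have h2 : (∑ u : Fin K, ∑ v : Fin K, if v < u then S (u, v) else 0)
      = ∑ u : Fin K, ∑ v : Fin K, if u < v then S (u, v) else 0 := by
    rw [Finset.sum_comm]
    refine Finset.sum_congr rfl fun u _ => Finset.sum_congr rfl fun v _ => ?_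
    rw [hsymm]
  have h3 : (∑ u : Fin K, ∑ v : Fin K, if u < v then S (u, v) else 0) + (∑ u : Fin K, ∑ v : Fin K, if v < u then S (u, v) else 0) = ∑ u : Fin K, ∑ v : Fin K, S (u, v) := by
    rw [← Finset.sum_add_distrib]
    refine Finset.sum_congr rfl fun u _ => ?_
    rw [← Finset.sum_add_distrib]
    exact Finset.sum_congr rfl fun v _ => (key u v).symm
  rw [← h3, h2]; ring

lemma inner_eq (x y : EuclideanSpace ℝ (PairIdx K)) :
    ⟪x, y⟫ = ∑ u : Fin K, ∑ v : Fin K, if u < v then Vext x (u, v) * Vext y (u, v) else 0 := by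
  rw [← sum_pair (fun q => Vext x q * Vext y q)]
  rw [PiLp.inner_apply]
  refine Finset.sum_congr rfl fun p _ => ?_
  rw [Vext_coe, Vext_coe]
  simp [RCLike.inner_apply, mul_comm]

lemma Vext_bvec (m : Fin K) (u v : Fin K) :
    Vext (bvec K m) (u, v) = (if u = m then (1:ℝ) else 0) - (if v = m then (1:ℝ) else 0) := by
  rcases lt_trichotomy u v with h | h | h
  · rw [Vext_lt _ h]; rfl
  · subst h; rw [Vext_diag]; ring
  · have : Vext (bvec K m) (u, v) = - Vext (bvec K m) (v, u) := by rw [Vext_swap]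
    rw [this, Vext_lt _ h]
    show -((if v = m then (1:ℝ) else 0) - (if u = m then (1:ℝ) else 0)) = _
    ring

lemma inner_bvec (m : Fin K) (x : EuclideanSpace ℝ (PairIdx K)) :
    ⟪bvec K m, x⟫ = ∑ w : Fin K, Vext x (m, w) := by
  have hS : ∀ u v : Fin K, Vext (bvec K m) (v, u) * Vext x (v, u)
      = Vext (bvec K m) (u, v) * Vext x (u, v) := by
    intro u v; rw [Vext_swap (bvec K m) u v, Vext_swap x u v]; ring
  have hD : ∀ u : Fin K, Vext (bvec K m) (u, u) * Vext x (u, u) = 0 := by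
    intro u; rw [Vext_diag]; ring
  have h : 2 * (∑ u : Fin K, ∑ v : Fin K, if u < v then Vext (bvec K m) (u, v) * Vext x (u, v) else 0)
      = ∑ u : Fin K, ∑ v : Fin K, Vext (bvec K m) (u, v) * Vext x (u, v) :=
    half_sum (fun q => Vext (bvec K m) q * Vext x q) hS hD
  have hfull : (∑ u : Fin K, ∑ v : Fin K, Vext (bvec K m) (u, v) * Vext x (u, v))
      = 2 * ∑ w : Fin K, Vext x (m, w) := by
    have step : ∀ u v : Fin K, Vext (bvec K m) (u, v) * Vext x (u, v)
        = (if u = m then Vext x (u, v) else 0) - (if v = m then Vext x (u, v) else 0) := by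
      intro u v; rw [Vext_bvec]; split_ifs <;> ring
    simp only [step, Finset.sum_sub_distrib]
    have e1 : (∑ u : Fin K, ∑ v : Fin K, if u = m then Vext x (u, v) else 0)
        = ∑ v : Fin K, Vext x (m, v) := by
      rw [Finset.sum_comm]
      simp
    have e2 : (∑ u : Fin K, ∑ v : Fin K, if v = m then Vext x (u, v) else 0)
        = ∑ u : Fin K, Vext x (u, m) := by
      simp
    have e3 : (∑ u : Fin K, Vext x (u, m)) = - ∑ u : Fin K, Vext x (m, u) := by
      rw [← Finset.sum_neg_distrib]
      exact Finset.sum_congr rfl fun u _ => Vext_swap x m u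
    rw [e1, e2, e3]
    ring
  rw [hfull] at h
  rw [inner_eq]
  linarith

lemma Vext_cvec (i j k : Fin K) (u v : Fin K) :
    Vext (cvec K i j k) (u, v) = Craw i j k (u, v) := by
  rcases lt_trichotomy u v with h | h | h
  · rw [Vext_lt _ h, cvec_apply]
  · subst h; rw [Vext_diag, Craw_diag]
  · rw [Vext_swap (cvec K i j k) v u, Vext_lt _ h, cvec_apply, Craw_swap i j k v u]

lemma sum_Craw (s m j k : Fin K) (hjk : j < k) (hj : j ≠ s) (hk : k ≠ s) :
    ∑ w : Fin K, Craw s j k (m, w) = 0 := by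
  have hjk' : j ≠ k := hjk.ne
  have hkj : k ≠ j := hjk.ne'
  have hsj : s ≠ j := hj.symm
  have hsk : s ≠ k := hk.symm
  simp only [Craw, Prod.mk.injEq]
  rw [Finset.sum_sub_distrib]
  by_cases hms : m = s
  · subst hms; simp [hsj, hsk]
  · by_cases hmj : m = j
    · subst hmj; simp [hj, hjk']
    · by_cases hmk : m = k
      · subst hmk; simp [hk, hkj]
      · simp [hms, hmj, hmk]

lemma inner_bvec_cvec (m s j k : Fin K) (hjk : j < k) (hj : j ≠ s) (hk : k ≠ s) :
    ⟪bvec K m, cvec K s j k⟫ = 0 := by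
  rw [inner_bvec]
  rw [Finset.sum_congr rfl fun w _ => Vext_cvec s j k m w]
  exact sum_Craw s m j k hjk hj hk

lemma sum_anchored (s : Fin K) (f : Fin K × Fin K → ℝ) :
    ∑ p : {p : Fin K × Fin K // p.1 < p.2 ∧ p.1 ≠ s ∧ p.2 ≠ s}, f p.1
      = ∑ u : Fin K, ∑ v : Fin K, if u < v ∧ u ≠ s ∧ v ≠ s then f (u, v) else 0 := by
  rw [← Finset.sum_product', ← Finset.sum_filter]
  simp only [Prod.mk.eta, Finset.univ_product_univ]
  refine (Finset.sum_subtype _ ?_ f).symm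
  intro x; simp

lemma CrawA (s j k u t : Fin K) (hjk : j < k) (hut : u < t) (hus : u ≠ s) (hts : t ≠ s) :
    Craw s j k (u, t) = if u = j ∧ t = k then (1:ℝ) else 0 := by
  have h1 : ¬(u = k ∧ t = j) := by
    rintro ⟨rfl, rfl⟩; exact absurd hut (asymm hjk)
  simp only [Craw, Prod.mk.injEq]
  simp [hus, hts, h1]

lemma CrawB (s j k t : Fin K) (hjs : j ≠ s) (hks : k ≠ s) :
    Craw s j k (s, t) = (if t = j then (1:ℝ) else 0) - (if t = k then (1:ℝ) else 0) := by
  simp only [Craw, Prod.mk.injEq]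
  simp [Ne.symm hjs, Ne.symm hks]

lemma CrawC (s j k u : Fin K) (hjs : j ≠ s) (hks : k ≠ s) :
    Craw s j k (u, s) = (if u = k then (1:ℝ) else 0) - (if u = j then (1:ℝ) else 0) := by
  simp only [Craw, Prod.mk.injEq]
  simp [Ne.symm hjs, Ne.symm hks]

lemma merge_sum (x : EuclideanSpace ℝ (PairIdx K)) (s t : Fin K)
    (H : ∑ w : Fin K, Vext x (t, w) = 0) :
    (∑ k : Fin K, if t < k ∧ k ≠ s then Vext x (t, k) else 0)
      - (∑ j : Fin K, if j < t ∧ j ≠ s then Vext x (j, t) else 0) = - Vext x (t, s) := by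
  have point : ∀ w : Fin K,
      (if t < w ∧ w ≠ s then Vext x (t, w) else 0) - (if w < t ∧ w ≠ s then Vext x (w, t) else 0)
        = Vext x (t, w) - (if w = s then Vext x (t, w) else 0) := by
    intro w
    by_cases hws : w = s
    · subst hws
      simp
    · rcases lt_trichotomy t w with h | h | h
      · simp [h, asymm h, hws]
      · subst h; simp [lt_irrefl, hws, Vext_diag]
      · simp only [h, asymm h, hws]
        rw [Vext_swap x t w]
        simp [h, asymm h, hws]
  rw [← Finset.sum_sub_distrib, Finset.sum_congr rfl (fun w _ => point w),
    Finset.sum_sub_distrib, H]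
  simp [Finset.sum_ite_eq']

lemma esum_apply {ι α : Type*} [Fintype ι] [Fintype α] (f : α → EuclideanSpace ℝ ι) (q : ι) :
    (∑ i : α, f i) q = ∑ i : α, f i q := by
  have h := map_sum (EuclideanSpace.proj (𝕜 := ℝ) q) f Finset.univ
  simp only [PiLp.proj_apply] at h
  exact h

lemma cfam_eval (s : Fin K) (i j : {p : Fin K × Fin K // p.1 < p.2 ∧ p.1 ≠ s ∧ p.2 ≠ s}) :
    cfam K s i ⟨j.1, j.2.1⟩ = if i = j then (1:ℝ) else 0 := by
  obtain ⟨⟨i1, i2⟩, hi12, hi1, hi2⟩ := i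
  obtain ⟨⟨j1, j2⟩, hj12, hj1, hj2⟩ := j
  have hne : ¬(j1 = i2 ∧ j2 = i1) := by
    rintro ⟨rfl, rfl⟩; exact absurd hj12 (asymm hi12)
  show Craw s i1 i2 (j1, j2) = _
  simp only [Craw, Prod.mk.injEq, Subtype.mk.injEq]
  by_cases h : i1 = j1 ∧ i2 = j2
  · obtain ⟨rfl, rfl⟩ := h
    simp [hj1, hj2, hne, hi12.ne, hi12.ne']
  · have h' : ¬(j1 = i1 ∧ j2 = i2) := fun hc => h ⟨hc.1.symm, hc.2.symm⟩
    simp [hj1, hj2, hne, h, h']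

lemma reconstruct (s : Fin K) (x : EuclideanSpace ℝ (PairIdx K))
    (H : ∀ m : Fin K, ∑ w : Fin K, Vext x (m, w) = 0) :
    (∑ idx : {p : Fin K × Fin K // p.1 < p.2 ∧ p.1 ≠ s ∧ p.2 ≠ s},
        Vext x idx.1 • cfam K s idx) = x := by
  ext q
  obtain ⟨⟨u, t⟩, hut⟩ := q
  rw [esum_apply]
  simp only [PiLp.smul_apply, smul_eq_mul]
  have e0 : ∀ idx : {p : Fin K × Fin K // p.1 < p.2 ∧ p.1 ≠ s ∧ p.2 ≠ s},
      Vext x idx.1 * cfam K s idx ⟨(u, t), hut⟩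
        = Vext x idx.1 * Craw s idx.1.1 idx.1.2 (u, t) := by
    intro idx; rw [cfam, cvec_apply]
  rw [Finset.sum_congr rfl (fun idx _ => e0 idx),
    sum_anchored s (fun r => Vext x r * Craw s r.1 r.2 (u, t)), ← Vext_lt x hut]
  by_cases hus : u = s
  · subst hus
    have hts : t ≠ u := ne_of_gt hut
    have e1 : ∀ j k : Fin K,
        (if j < k ∧ j ≠ u ∧ k ≠ u then Vext x (j, k) * Craw u j k (u, t) else 0)
          = (if j = t then (if t < k ∧ k ≠ u then Vext x (t, k) else 0) else 0)
            - (if k = t then (if j < t ∧ j ≠ u then Vext x (j, t) else 0) else 0) := by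
      intro j k
      by_cases hP : j < k ∧ j ≠ u ∧ k ≠ u
      · rw [if_pos hP, CrawB u j k t hP.2.1 hP.2.2]
        by_cases hjt : j = t
        · subst hjt
          simp [hP.1, hP.2.2, hP.1.ne, hP.1.ne']
        · by_cases hkt : k = t
          · subst hkt
            simp [hjt, Ne.symm hjt, hP.1, hP.2.1]
          · simp [hjt, hkt, Ne.symm hjt, Ne.symm hkt]
      · rw [if_neg hP]
        by_cases hjt : j = t
        · subst hjt
          have hc : ¬(j < k ∧ k ≠ u) := fun hc => hP ⟨hc.1, hts, hc.2⟩
          simp [hc, lt_irrefl]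
        · by_cases hkt : k = t
          · subst hkt
            have hc : ¬(j < k ∧ j ≠ u) := fun hc => hP ⟨hc.1, hc.2, hts⟩
            simp [hjt, hc]
          · simp [hjt, hkt]
    rw [Finset.sum_congr rfl fun j _ => Finset.sum_congr rfl fun k _ => e1 j k]
    simp only [Finset.sum_sub_distrib]
    have eA : (∑ j : Fin K, ∑ k : Fin K,
          if j = t then (if t < k ∧ k ≠ u then Vext x (t, k) else 0) else 0)
        = ∑ k : Fin K, if t < k ∧ k ≠ u then Vext x (t, k) else 0 := by
      rw [Finset.sum_comm]
      refine Finset.sum_congr rfl fun k _ => ?_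
      rw [Finset.sum_ite_eq' Finset.univ t (fun _ => if t < k ∧ k ≠ u then Vext x (t, k) else 0)]
      simp
    have eB : (∑ j : Fin K, ∑ k : Fin K,
          if k = t then (if j < t ∧ j ≠ u then Vext x (j, t) else 0) else 0)
        = ∑ j : Fin K, if j < t ∧ j ≠ u then Vext x (j, t) else 0 := by
      refine Finset.sum_congr rfl fun j _ => ?_
      rw [Finset.sum_ite_eq' Finset.univ t (fun _ => if j < t ∧ j ≠ u then Vext x (j, t) else 0)]
      simp
    rw [eA, eB, merge_sum x u t (H t), Vext_swap x t u]
  · by_cases hts : t = s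
    · subst hts
      have hus' : u ≠ t := hus
      have e1 : ∀ j k : Fin K,
          (if j < k ∧ j ≠ t ∧ k ≠ t then Vext x (j, k) * Craw t j k (u, t) else 0)
            = (if k = u then (if j < u ∧ j ≠ t then Vext x (j, u) else 0) else 0)
              - (if j = u then (if u < k ∧ k ≠ t then Vext x (u, k) else 0) else 0) := by
        intro j k
        by_cases hP : j < k ∧ j ≠ t ∧ k ≠ t
        · rw [if_pos hP, CrawC t j k u hP.2.1 hP.2.2]
          by_cases hku : k = u
          · subst hku
            simp [hP.1, hP.2.1, hP.1.ne, hP.1.ne']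
          · by_cases hju : j = u
            · subst hju
              simp [hku, Ne.symm hku, hP.1, hP.2.2]
            · simp [hku, hju, Ne.symm hku, Ne.symm hju]
        · rw [if_neg hP]
          by_cases hku : k = u
          · subst hku
            have hc : ¬(j < k ∧ j ≠ t) := fun hc => hP ⟨hc.1, hc.2, hus'⟩
            simp [hc, lt_irrefl]
          · by_cases hju : j = u
            · subst hju
              have hc : ¬(j < k ∧ k ≠ t) := fun hc => hP ⟨hc.1, hus', hc.2⟩
              simp [hku, hc]
            · simp [hku, hju]
      rw [Finset.sum_congr rfl fun j _ => Finset.sum_congr rfl fun k _ => e1 j k]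
      simp only [Finset.sum_sub_distrib]
      have eA : (∑ j : Fin K, ∑ k : Fin K,
            if k = u then (if j < u ∧ j ≠ t then Vext x (j, u) else 0) else 0)
          = ∑ j : Fin K, if j < u ∧ j ≠ t then Vext x (j, u) else 0 := by
        refine Finset.sum_congr rfl fun j _ => ?_
        rw [Finset.sum_ite_eq' Finset.univ u (fun _ => if j < u ∧ j ≠ t then Vext x (j, u) else 0)]
        simp
      have eB : (∑ j : Fin K, ∑ k : Fin K,
            if j = u then (if u < k ∧ k ≠ t then Vext x (u, k) else 0) else 0)
          = ∑ k : Fin K, if u < k ∧ k ≠ t then Vext x (u, k) else 0 := by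
        rw [Finset.sum_comm]
        refine Finset.sum_congr rfl fun k _ => ?_
        rw [Finset.sum_ite_eq' Finset.univ u (fun _ => if u < k ∧ k ≠ t then Vext x (u, k) else 0)]
        simp
      rw [eA, eB]
      have hm := merge_sum x t u (H u)
      linarith
    · -- case A
      have e1 : ∀ j k : Fin K,
          (if j < k ∧ j ≠ s ∧ k ≠ s then Vext x (j, k) * Craw s j k (u, t) else 0)
            = if u = j ∧ t = k then Vext x (u, t) else 0 := by
        intro j k
        by_cases h : u = j ∧ t = k
        · obtain ⟨rfl, rfl⟩ := h
          rw [if_pos ⟨hut, hus, hts⟩, CrawA s u t u t hut hut hus hts]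
          simp
        · split_ifs with hP
          · rw [CrawA s j k u t hP.1 hut hus hts, if_neg h]
            ring
          · rfl
      rw [Finset.sum_congr rfl fun j _ => Finset.sum_congr rfl fun k _ => e1 j k]
      simp [ite_and, Finset.sum_ite_eq]


lemma card_lt_pairs (β : Type*) [Fintype β] [LinearOrder β] [DecidableEq β] :
    Fintype.card {p : β × β // p.1 < p.2}
      = Fintype.card β * (Fintype.card β - 1) / 2 := by
  classical
  set n := Fintype.card β with hn
  have h1 : Fintype.card {p : β × β // p.1 < p.2}
      = (Finset.univ.filter fun p : β × β => p.1 < p.2).card := Fintype.card_subtype _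
  have hswap : (Finset.univ.filter fun p : β × β => p.2 < p.1).card
      = (Finset.univ.filter fun p : β × β => p.1 < p.2).card := by
    apply Finset.card_bij' (fun p _ => Prod.swap p) (fun p _ => Prod.swap p)
    · intro p hp; simp at hp ⊢; exact hp
    · intro p hp; simp at hp ⊢; exact hp
    · intro p _; simp
    · intro p _; simp
  have heq : (Finset.univ.filter fun p : β × β => p.1 = p.2).card = n := by
    have himg : (Finset.univ.filter fun p : β × β => p.1 = p.2)
        = Finset.univ.image (fun a : β => (a, a)) := by
      ext ⟨a, b⟩
      simp only [Finset.mem_filter, Finset.mem_univ, true_and, Finset.mem_image, Prod.mk.injEq]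
      constructor
      · rintro rfl; exact ⟨a, rfl, rfl⟩
      · rintro ⟨c, rfl, rfl⟩; rfl
    rw [himg, Finset.card_image_of_injective _ (fun a b h => (Prod.mk.injEq _ _ _ _).mp h |>.1),
      Finset.card_univ]
  have htotal : (Finset.univ.filter fun p : β × β => p.1 < p.2).card
      + (Finset.univ.filter fun p : β × β => ¬p.1 < p.2).card = n * n := by
    rw [Finset.card_filter_add_card_filter_not]
    simp [Finset.card_univ, Fintype.card_prod, hn]
  have hsplitset : (Finset.univ.filter fun p : β × β => ¬p.1 < p.2)
      = (Finset.univ.filter fun p : β × β => p.2 < p.1)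
        ∪ (Finset.univ.filter fun p : β × β => p.1 = p.2) := by
    ext p
    simp only [Finset.mem_filter, Finset.mem_univ, true_and, Finset.mem_union, not_lt]
    constructor
    · intro h; rcases lt_or_eq_of_le h with h' | h'
      · exact Or.inl h'
      · exact Or.inr h'.symm
    · rintro (h | h)
      · exact le_of_lt h
      · exact le_of_eq h.symm
  have hdisj : Disjoint (Finset.univ.filter fun p : β × β => p.2 < p.1)
      (Finset.univ.filter fun p : β × β => p.1 = p.2) := by
    rw [Finset.disjoint_left]
    intro p hp hq
    simp only [Finset.mem_filter, Finset.mem_univ, true_and] at hp hq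
    exact absurd (hq ▸ hp) (lt_irrefl _)
  have hsplit : (Finset.univ.filter fun p : β × β => ¬p.1 < p.2).card
      = (Finset.univ.filter fun p : β × β => p.1 < p.2).card + n := by
    rw [hsplitset, Finset.card_union_of_disjoint hdisj, hswap, heq]
  have expand : n * n = n * (n - 1) + n := by
    cases n with
    | zero => simp
    | succ m =>
      have : (m + 1) * (m + 1) = (m + 1) * m + (m + 1) := by ring
      simpa [Nat.succ_sub_one] using this
  rw [h1]
  omega

lemma card_anchored (s : Fin K) :
    Fintype.card {p : Fin K × Fin K // p.1 < p.2 ∧ p.1 ≠ s ∧ p.2 ≠ s}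
      = (K - 1) * (K - 2) / 2 := by
  classical
  have e : {p : Fin K × Fin K // p.1 < p.2 ∧ p.1 ≠ s ∧ p.2 ≠ s}
      ≃ {q : {x : Fin K // x ≠ s} × {x : Fin K // x ≠ s} // q.1 < q.2} :=
  { toFun := fun p => ⟨(⟨p.1.1, p.2.2.1⟩, ⟨p.1.2, p.2.2.2⟩), Subtype.mk_lt_mk.mpr p.2.1⟩
    invFun := fun q => ⟨(q.1.1.1, q.1.2.1), Subtype.mk_lt_mk.mp q.2, q.1.1.2, q.1.2.2⟩
    left_inv := fun p => rfl
    right_inv := fun q => rfl }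
  rw [Fintype.card_congr e, card_lt_pairs]
  have hβ : Fintype.card {x : Fin K // x ≠ s} = K - 1 := by
    simp [Fintype.card_subtype_compl]
  rw [hβ]
  have h2 : K - 1 - 1 = K - 2 := by omega
  rw [h2]

end Anchored

theorem anchored_cvec_basis (K : ℕ) (hK : 3 ≤ K) (s : Fin K) :
    Fintype.card {p : Fin K × Fin K // p.1 < p.2 ∧ p.1 ≠ s ∧ p.2 ≠ s}
        = (K - 1) * (K - 2) / 2 ∧
    LinearIndependent ℝ (cfam K s) ∧
    Submodule.span ℝ (Set.range (cfam K s))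
      = (Submodule.span ℝ (Set.range (bvec K)))ᗮ := by
  classical
  refine ⟨Anchored.card_anchored s, ?_, ?_⟩
  · rw [Fintype.linearIndependent_iff]
    intro g hg i
    have h := congrArg (fun y : EuclideanSpace ℝ (PairIdx K) => y ⟨i.1, i.2.1⟩) hg
    simp only at h
    rw [Anchored.esum_apply] at h
    simp only [PiLp.smul_apply, smul_eq_mul] at h
    rw [Finset.sum_congr rfl (fun j _ => by rw [Anchored.cfam_eval s j i])] at h
    simpa [mul_ite, mul_one, mul_zero, Finset.sum_ite_eq'] using h
  · apply le_antisymm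
    · rw [Submodule.span_le]
      rintro _ ⟨idx, rfl⟩
      rw [SetLike.mem_coe, Submodule.mem_orthogonal]
      intro u hu
      refine Submodule.span_induction ?_ ?_ ?_ ?_ hu
      · rintro _ ⟨m, rfl⟩
        exact Anchored.inner_bvec_cvec m s idx.1.1 idx.1.2 idx.2.1 idx.2.2.1 idx.2.2.2
      · simp
      · intro a b _ _ ha hb
        rw [inner_add_left, ha, hb, add_zero]
      · intro r a _ ha
        rw [real_inner_smul_left, ha, mul_zero]
    · intro x hx
      have H : ∀ m : Fin K, ∑ w : Fin K, Anchored.Vext x (m, w) = 0 := by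
        intro m
        rw [← Anchored.inner_bvec]
        exact (Submodule.mem_orthogonal _ x).mp hx (bvec K m)
          (Submodule.subset_span ⟨m, rfl⟩)
      rw [← Anchored.reconstruct s x H]
      exact Submodule.sum_mem _ fun idx _ =>
        Submodule.smul_mem _ _ (Submodule.subset_span ⟨idx, rfl⟩)
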